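/- Let P(z) = I_d z^p + P₁z^{p-1} + ... + P_p be a d×d matrix polynomial, P_p = αβᵀ with α, β ∈ ℝ^{d×r} of full rank r, and define P*(z) = (P(z) - P_p)/z (a matrix polynomial since P(0) = P_p). Define the d×d matrix polynomial P̃(z) with blocks P̃₁₁(z) = αᵀα(βᵀβ) + αᵀP*(z)βz, P̃₁₂(z) = αᵀP*(z)β⊥, P̃₂₁(z) = α⊥ᵀP*(z)βz, P̃₂₂(z) = α⊥ᵀP*(z)β⊥. Then for all z ≠ 0, det(P̃(z)) = z^{-(d-r)} · det((α, α⊥)ᵀ) · det(P(z)) · det((β, β⊥)). -/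

import Mathlib

open Matrix Finset

theorem stmt_6 {d r p : ℕ} (hr : 0 < r) (hrd : r < d) (hp : 0 < p)
    (Pc : ℕ → Matrix (Fin d) (Fin d) ℝ)
    (α β : Matrix (Fin d) (Fin r) ℝ)
    (αp βp : Matrix (Fin d) (Fin (d - r)) ℝ)
    (hα : α.rank = r) (hβ : β.rank = r)
    (hαp : αp.rank = d - r) (hβp : βp.rank = d - r)
    (hoα : αᵀ * αp = 0) (hoβ : βᵀ * βp = 0)
    (hPp : Pc p = α * βᵀ)
    (P Pstar : ℝ → Matrix (Fin d) (Fin d) ℝ)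
    (hP : ∀ z : ℝ, P z = z ^ p • (1 : Matrix (Fin d) (Fin d) ℝ) +
        ∑ i ∈ Finset.range p, z ^ (p - 1 - i) • Pc (i + 1))
    (hPstar : ∀ z : ℝ, z • Pstar z = P z - Pc p) :
    ∀ z : ℝ, z ≠ 0 →
      (Matrix.fromBlocks
          (αᵀ * α * (βᵀ * β) + z • (αᵀ * Pstar z * β)) (αᵀ * Pstar z * βp)
          (z • (αpᵀ * Pstar z * β)) (αpᵀ * Pstar z * βp)).det
        = (z ^ (d - r))⁻¹ *
          ((Matrix.reindex (Equiv.refl (Fin d))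
              (finSumFinEquiv.trans (finCongr (Nat.add_sub_cancel' hrd.le)))
              (Matrix.fromCols α αp))ᵀ).det *
          (P z).det *
          (Matrix.reindex (Equiv.refl (Fin d))
              (finSumFinEquiv.trans (finCongr (Nat.add_sub_cancel' hrd.le)))
              (Matrix.fromCols β βp)).det := by
  intro z hz
  set e : Fin r ⊕ Fin (d - r) ≃ Fin d :=
    finSumFinEquiv.trans (finCongr (Nat.add_sub_cancel' hrd.le)) with he
  have hαpα : αpᵀ * α = 0 := by
    have := congrArg Matrix.transpose hoα
    simpa [Matrix.transpose_mul] using this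
  have hPz : P z = z • Pstar z + α * βᵀ := by
    rw [hPstar z, ← hPp]; abel
  -- key block identity
  have key : (fromCols α αp)ᵀ * P z * fromCols β βp
      = Matrix.fromBlocks
          (αᵀ * α * (βᵀ * β) + z • (αᵀ * Pstar z * β)) (αᵀ * Pstar z * βp)
          (z • (αpᵀ * Pstar z * β)) (αpᵀ * Pstar z * βp)
        * Matrix.fromBlocks (1 : Matrix (Fin r) (Fin r) ℝ) 0 0
            (z • (1 : Matrix (Fin (d - r)) (Fin (d - r)) ℝ)) := by
    rw [transpose_fromCols, fromRows_mul, fromRows_mul_fromCols,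
      Matrix.fromBlocks_multiply]
    have h12 : αᵀ * (α * (βᵀ * βp)) = 0 := by rw [hoβ, Matrix.mul_zero, Matrix.mul_zero]
    have h21 : αpᵀ * (α * (βᵀ * β)) = 0 := by
      rw [← Matrix.mul_assoc, hαpα, Matrix.zero_mul]
    have h22 : αpᵀ * (α * (βᵀ * βp)) = 0 := by rw [hoβ, Matrix.mul_zero, Matrix.mul_zero]
    simp [hPz, Matrix.mul_add, Matrix.add_mul, Matrix.mul_smul, Matrix.smul_mul,
      Matrix.mul_assoc, h12, h21, h22, add_comm]
  have hsub : ((Matrix.reindex (Equiv.refl (Fin d)) e (fromCols α αp))ᵀ) * P z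
      * (Matrix.reindex (Equiv.refl (Fin d)) e (fromCols β βp))
      = ((fromCols α αp)ᵀ * P z * fromCols β βp).submatrix e.symm e.symm := by
    have h1 : (Matrix.reindex (Equiv.refl (Fin d)) e (fromCols α αp))ᵀ
        = ((fromCols α αp)ᵀ).submatrix e.symm (Equiv.refl (Fin d)) := by
      ext i j; simp [Matrix.reindex, Matrix.submatrix, Matrix.transpose]
    have h2 : Matrix.reindex (Equiv.refl (Fin d)) e (fromCols β βp)
        = (fromCols β βp).submatrix (Equiv.refl (Fin d)) e.symm := by
      ext i j; simp [Matrix.reindex, Matrix.submatrix]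
    have h3 : P z = (P z).submatrix (Equiv.refl (Fin d)) (Equiv.refl (Fin d)) := by
      ext i j; simp
    rw [h1, h2]
    nth_rewrite 1 [h3]
    rw [Matrix.submatrix_mul_equiv, Matrix.submatrix_mul_equiv]
  have hdet : ((Matrix.reindex (Equiv.refl (Fin d)) e (fromCols α αp))ᵀ).det
      * (P z).det
      * (Matrix.reindex (Equiv.refl (Fin d)) e (fromCols β βp)).det
      = (Matrix.fromBlocks
          (αᵀ * α * (βᵀ * β) + z • (αᵀ * Pstar z * β)) (αᵀ * Pstar z * βp)
          (z • (αpᵀ * Pstar z * β)) (αpᵀ * Pstar z * βp)).det * z ^ (d - r) := by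
    rw [← Matrix.det_mul, ← Matrix.det_mul, hsub, Matrix.det_submatrix_equiv_self, key,
      Matrix.det_mul, Matrix.det_fromBlocks_zero₂₁]
    simp [Matrix.det_smul]
  have hzn : (z : ℝ) ^ (d - r) ≠ 0 := pow_ne_zero _ hz

  calc (Matrix.fromBlocks
          (αᵀ * α * (βᵀ * β) + z • (αᵀ * Pstar z * β)) (αᵀ * Pstar z * βp)
          (z • (αpᵀ * Pstar z * β)) (αpᵀ * Pstar z * βp)).det
      = (z ^ (d - r))⁻¹ * ((Matrix.fromBlocks
          (αᵀ * α * (βᵀ * β) + z • (αᵀ * Pstar z * β)) (αᵀ * Pstar z * βp)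
          (z • (αpᵀ * Pstar z * β)) (αpᵀ * Pstar z * βp)).det * z ^ (d - r)) := by
        field_simp
    _ = (z ^ (d - r))⁻¹ *
          (((Matrix.reindex (Equiv.refl (Fin d)) e (fromCols α αp))ᵀ).det * (P z).det *
            (Matrix.reindex (Equiv.refl (Fin d)) e (fromCols β βp)).det) := by rw [hdet]
    _ = (z ^ (d - r))⁻¹ *
          ((Matrix.reindex (Equiv.refl (Fin d)) e (fromCols α αp))ᵀ).det * (P z).det *
          (Matrix.reindex (Equiv.refl (Fin d)) e (fromCols β βp)).det := by ring
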